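/- Let T be a tree on a vertex set V, let I be a set of edges of T, and let G be a simple graph on V such that every edge of G either belongs to I or joins two vertices in the same connected component of T − I. Let u, v ∈ V and let Q be a path in G from u to v (a walk with no repeated vertices). Then the set of edges of I traversed by Q equals the set of edges of I lying on the unique path between u and v in the tree T. -/

import Mathlib

open SimpleGraph

/-- If every edge of `H` is either `s(a,b)` or joins `T'`-reachable vertices, then a walk
in `H` avoiding `s(a,b)` connects `T'`-reachable vertices. -/
lemma auxA {V : Type*} {H T' : SimpleGraph V} {a b : V}
    (hH : ∀ x y, H.Adj x y → s(x, y) = s(a, b) ∨ T'.Reachable x y)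
    {u v : V} (w : H.Walk u v) (he : s(a, b) ∉ w.edges) : T'.Reachable u v := by
  induction w with
  | nil => exact Reachable.refl _
  | @cons u x v h w ih =>
    rw [SimpleGraph.Walk.edges_cons, List.mem_cons] at he
    push_neg at he
    rcases hH _ _ h with h1 | h1
    · exact absurd h1 he.1.symm
    · exact h1.trans (ih he.2)

lemma auxB {V : Type*} {H T' : SimpleGraph V} {a b : V}
    (hH : ∀ x y, H.Adj x y → s(x, y) = s(a, b) ∨ T'.Reachable x y)
    (hab : ¬ T'.Reachable a b)
    {u v : V} (w : H.Walk u v) (hw : w.edges.Nodup) (he : s(a, b) ∈ w.edges) :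
    ¬ T'.Reachable u v := by
  induction w with
  | nil => simp at he
  | @cons u x v h w ih =>
    rw [SimpleGraph.Walk.edges_cons, List.nodup_cons] at hw
    rw [SimpleGraph.Walk.edges_cons, List.mem_cons] at he
    rcases he with he | he
    · have hxv : T'.Reachable x v := auxA hH w (by rw [he]; exact hw.1)
      intro huv
      rcases Sym2.eq_iff.mp he.symm with ⟨ha', hb'⟩ | ⟨ha', hb'⟩
      · subst ha'; subst hb'; exact hab (huv.trans hxv.symm)
      · subst ha'; subst hb'; exact hab ((huv.trans hxv.symm)).symm
    · have hux : T'.Reachable u x := by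
        rcases hH _ _ h with h1 | h1
        · exact absurd (h1 ▸ he) hw.1
        · exact h1
      exact fun huv => ih hw.2 he (hux.symm.trans huv)

theorem path_edges_inter_eq_tree_path_edges_inter
    {V : Type*} (T : SimpleGraph V) (hT : T.IsTree)
    (I : Set (Sym2 V)) (hI : I ⊆ T.edgeSet)
    (G : SimpleGraph V)
    (hG : ∀ a b : V, G.Adj a b → s(a, b) ∈ I ∨ (T.deleteEdges I).Reachable a b)
    (u v : V) (p : G.Walk u v) (hp : p.IsPath)
    (q : T.Walk u v) (hq : q.IsPath) :
    {e | e ∈ I ∧ e ∈ p.edges} = {e | e ∈ I ∧ e ∈ q.edges} := by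
  have key : ∀ e ∈ I, (e ∈ p.edges ↔ e ∈ q.edges) := by
    intro e heI
    induction e with
    | h a b =>
      set T' : SimpleGraph V := T.deleteEdges {s(a, b)} with hT'
      have heT : s(a, b) ∈ T.edgeSet := hI heI
      -- the edge is a bridge of the tree
      have hbridge : T.IsBridge s(a, b) :=
        (isAcyclic_iff_forall_edge_isBridge.mp hT.2) heT
      have hab : ¬ T'.Reachable a b := hbridge
      -- hypothesis for G
      have hHG : ∀ x y, G.Adj x y → s(x, y) = s(a, b) ∨ T'.Reachable x y := by
        intro x y hxy
        rcases hG x y hxy with h | h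
        · by_cases hxe : s(x, y) = s(a, b)
          · exact Or.inl hxe
          · refine Or.inr (Adj.reachable ?_)
            rw [hT', SimpleGraph.deleteEdges_adj]
            exact ⟨(SimpleGraph.mem_edgeSet T).mp (hI h), by simpa using hxe⟩
        · refine Or.inr (h.mono ?_)
          exact SimpleGraph.deleteEdges_anti (by simpa using heI)
      -- hypothesis for T
      have hHT : ∀ x y, T.Adj x y → s(x, y) = s(a, b) ∨ T'.Reachable x y := by
        intro x y hxy
        by_cases hxe : s(x, y) = s(a, b)
        · exact Or.inl hxe
        · refine Or.inr (Adj.reachable ?_)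
          rw [hT', SimpleGraph.deleteEdges_adj]
          exact ⟨hxy, by simpa using hxe⟩
      constructor
      · intro hmem
        by_contra hq'
        exact (auxB hHG hab p hp.edges_nodup hmem) (auxA hHT q hq')
      · intro hmem
        by_contra hp'
        exact (auxB hHT hab q hq.edges_nodup hmem) (auxA hHG p hp')
  ext e
  constructor
  · rintro ⟨h1, h2⟩; exact ⟨h1, (key e h1).mp h2⟩
  · rintro ⟨h1, h2⟩; exact ⟨h1, (key e h1).mpr h2⟩
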